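/- Let (K, ≤) be a compact partially ordered topological space equipped with a binary operation ω : K × K → K, let Aut₊(K) denote the group of all order-preserving homeomorphisms f of K satisfying f(ω(x, y)) = ω(f(x), f(y)) for all x, y ∈ K, and let P be a closed subgroup of Aut₊(K). Then the compact-open topology τ_co restricted to P is minimal within the class of π-uniform topologies on P; that is, every Hausdorff group topology σ on P which is coarser than τ_co and for which the natural evaluation action (P, σ) × K → K is π-uniform coincides with τ_co. -/

import Mathlib

open scoped Topology

/-- The group of self-homeomorphisms of `X`, with composition as multiplication:
`(f * g) x = f (g x)`, identity `Homeomorph.refl` and inverse `Homeomorph.symm`. -/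
instance homeoGroup (X : Type*) [TopologicalSpace X] : Group (X ≃ₜ X) where
  mul f g := g.trans f
  one := Homeomorph.refl X
  inv := Homeomorph.symm
  mul_assoc f g h := rfl
  one_mul f := rfl
  mul_one f := rfl
  inv_mul_cancel f := by ext x; exact f.symm_apply_apply x

/-- The compact-open topology on the homeomorphism group `H(X)`, induced from the
compact-open topology on `C(X, X)`. -/
def coTop (X : Type*) [TopologicalSpace X] : TopologicalSpace (X ≃ₜ X) :=
  TopologicalSpace.induced (fun f : X ≃ₜ X => (f : C(X, X))) ContinuousMap.compactOpen

/-- The unique uniformity compatible with the topology of a compact Hausdorff space. -/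
def cptUnif (X : Type*) [TopologicalSpace X] [CompactSpace X] [T2Space X] :
    Filter (X × X) :=
  @uniformity X uniformSpaceOfCompactR1

/-- An action `act` of a group `G` equipped with a topology `σ` on a set `X` equipped with a
uniformity (filter) `𝔅` is *π-uniform* if for every `g₀ ∈ G` and every entourage `ε ∈ 𝔅`
there exist an entourage `δ ∈ 𝔅` and a neighborhood `U` of `g₀` such that
`(g • x, g • y) ∈ ε` whenever `(x, y) ∈ δ` and `g ∈ U`. -/
def IsPiUniform {G X : Type*} (σ : TopologicalSpace G) (𝔅 : Filter (X × X))
    (act : G → X → X) : Prop :=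
  ∀ g₀ : G, ∀ ε ∈ 𝔅, ∃ δ ∈ 𝔅, ∃ U ∈ @nhds G σ g₀,
    ∀ g ∈ U, ∀ x y : X, (x, y) ∈ δ → (act g x, act g y) ∈ ε

/-- The group `Aut₊(K)` of all order-preserving homeomorphisms of `K` that are automorphisms
of the binary operation `ω`, as a subgroup of the homeomorphism group of `K`. -/
def AutPlus (K : Type*) [TopologicalSpace K] [PartialOrder K] (ω : K → K → K) :
    Subgroup (K ≃ₜ K) where
  carrier := {f : K ≃ₜ K |
    (∀ x y : K, x ≤ y ↔ f x ≤ f y) ∧ ∀ x y : K, f (ω x y) = ω (f x) (f y)}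
  one_mem' := ⟨fun _ _ => Iff.rfl, fun _ _ => rfl⟩
  mul_mem' := by
    rintro a b ⟨ha1, ha2⟩ ⟨hb1, hb2⟩
    constructor
    · intro x y
      exact (hb1 x y).trans (ha1 (b x) (b y))
    · intro x y
      show a (b (ω x y)) = ω (a (b x)) (a (b y))
      rw [hb2, ha2]
  inv_mem' := by
    rintro a ⟨ha1, ha2⟩
    constructor
    · intro x y
      have := ha1 (a.symm x) (a.symm y)
      simpa using this.symm
    · intro x y
      show a.symm (ω x y) = ω (a.symm x) (a.symm y)
      apply a.injective
      rw [ha2]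
      simp

open scoped Uniformity

/-- Let `K` be a compact partially ordered topological space equipped with a
binary operation `ω`, and let `P` be a closed subgroup of `Aut₊(K)`.  Then the compact-open
topology on `P` is minimal within the class of π-uniform topologies on `P`. -/
theorem compactOpen_minimal_piUniform_orderedAut {K : Type*}
    [TopologicalSpace K] [CompactSpace K] [T2Space K]
    [PartialOrder K] [OrderClosedTopology K] (ω : K → K → K)
    (P : Subgroup (K ≃ₜ K)) (hPle : P ≤ AutPlus K ω)
    (hPclosed : IsClosed[coTop K] (P : Set (K ≃ₜ K)))
    (σ : TopologicalSpace ↥P)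
    (hσgrp : @IsTopologicalGroup ↥P σ _) (hσT2 : @T2Space ↥P σ)
    (hcoarse : TopologicalSpace.induced (Subtype.val : ↥P → K ≃ₜ K) (coTop K) ≤ σ)
    (hπ : IsPiUniform σ (cptUnif K) (fun (p : ↥P) (x : K) => (p : K ≃ₜ K) x)) :
    σ = TopologicalSpace.induced (Subtype.val : ↥P → K ≃ₜ K) (coTop K) := by
  letI u : UniformSpace K := uniformSpaceOfCompactR1
  letI : TopologicalSpace ↥P := σ
  haveI : IsTopologicalGroup ↥P := hσgrp
  haveI : T2Space ↥P := hσT2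
  have hcu : cptUnif K = 𝓤 K := rfl
  rw [hcu] at hπ
  refine le_antisymm ?_ hcoarse
  rw [le_iff_nhds]
  intro g₀
  rw [Filter.le_iff_ultrafilter]
  intro 𝒰 h𝒰
  set f : ↥P → K ≃ₜ K := Subtype.val with hfdef
  -- pointwise ultrafilter limits exist by compactness
  have hcpt : ∀ v : ↥P → K, ∃ z : K, Filter.Tendsto v 𝒰 (𝓝 z) := by
    intro v
    rcases isCompact_univ.ultrafilter_le_nhds (𝒰.map v)
      (Filter.le_principal_iff.2 Filter.univ_mem) with ⟨z, _, hz⟩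
    exact ⟨z, hz⟩
  choose p hp using fun x : K => hcpt fun h => f h x
  choose q hq using fun x : K => hcpt fun h => (f h).symm x
  -- the inverses converge to g₀⁻¹ in σ
  have hinv : Filter.Tendsto (fun h : ↥P => h⁻¹) (𝒰 : Filter ↥P) (𝓝 g₀⁻¹) :=
    (continuous_inv.tendsto g₀).mono_left h𝒰
  -- equicontinuity along the ultrafilter
  have key : ∀ ε ∈ 𝓤 K, ∃ δ ∈ 𝓤 K,
      ∀ᶠ h : ↥P in 𝒰, ∀ x y : K, (x, y) ∈ δ → (f h x, f h y) ∈ ε := by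
    intro ε hε
    obtain ⟨δ, hδ, U, hU, hprop⟩ := hπ g₀ ε hε
    exact ⟨δ, hδ, Filter.eventually_of_mem (h𝒰 hU) fun h hh x y hxy => hprop h hh x y hxy⟩
  have keyInv : ∀ ε ∈ 𝓤 K, ∃ δ ∈ 𝓤 K,
      ∀ᶠ h : ↥P in 𝒰, ∀ x y : K, (x, y) ∈ δ → ((f h).symm x, (f h).symm y) ∈ ε := by
    intro ε hε
    obtain ⟨δ, hδ, U, hU, hprop⟩ := hπ g₀⁻¹ ε hε
    refine ⟨δ, hδ, Filter.eventually_of_mem (hinv hU) fun h hh x y hxy => ?_⟩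
    exact hprop h⁻¹ hh x y hxy
  -- uniform continuity of pointwise limits
  have hucgen : ∀ (e : ↥P → K → K) (r : K → K),
      (∀ x, Filter.Tendsto (fun h => e h x) 𝒰 (𝓝 (r x))) →
      (∀ ε ∈ 𝓤 K, ∃ δ ∈ 𝓤 K, ∀ᶠ h : ↥P in 𝒰, ∀ x y : K, (x, y) ∈ δ → (e h x, e h y) ∈ ε) →
      ∀ ε ∈ 𝓤 K, ∃ δ ∈ 𝓤 K, ∀ x y : K, (x, y) ∈ δ → (r x, r y) ∈ ε := by
    intro e r hr hkey ε hε
    obtain ⟨ε', ⟨hε', hε'c⟩, hsub⟩ := uniformity_hasBasis_closed.mem_iff.1 hε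
    obtain ⟨δ, hδ, hev⟩ := hkey ε' hε'
    refine ⟨δ, hδ, fun x y hxy => hsub ?_⟩
    exact hε'c.mem_of_tendsto ((hr x).prodMk_nhds (hr y))
      (hev.mono fun h hh => hh x y hxy)
  have hpuc := hucgen _ p hp key
  have hquc := hucgen _ q hq keyInv
  have mkcont : ∀ r : K → K,
      (∀ ε ∈ 𝓤 K, ∃ δ ∈ 𝓤 K, ∀ x y : K, (x, y) ∈ δ → (r x, r y) ∈ ε) → Continuous r := by
    intro r hr
    refine UniformContinuous.continuous ?_
    rw [uniformContinuous_def]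
    intro s hs
    obtain ⟨δ, hδ, hst⟩ := hr s hs
    exact Filter.mem_of_superset hδ fun z hz => hst z.1 z.2 hz
  have hpc : Continuous p := mkcont p hpuc
  have hqc : Continuous q := mkcont q hquc
  -- uniform convergence to p
  have hpu : TendstoUniformly (fun (h : ↥P) (x : K) => f h x) p (𝒰 : Filter ↥P) := by
    intro ε hε
    obtain ⟨ε', hε', hsymm, hcomp⟩ := comp_comp_symm_mem_uniformity_sets hε
    obtain ⟨δ₁, hδ₁, hev₁⟩ := key ε' hε'
    obtain ⟨δ₂, hδ₂, hpm⟩ := hpuc ε' hε'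
    obtain ⟨s, hsfin, hscov⟩ :=
      (isCompact_univ (X := K)).totallyBounded (δ₁ ∩ δ₂) (Filter.inter_mem hδ₁ hδ₂)
    have hev₂ : ∀ᶠ h : ↥P in 𝒰, ∀ z ∈ s, (p z, f h z) ∈ ε' := by
      rw [Filter.eventually_all_finite hsfin]
      exact fun z _ => (hp z).eventually (Filter.eventually_of_mem
        (mem_nhds_left (p z) hε') fun w hw => hw)
    filter_upwards [hev₁, hev₂] with h hh₁ hh₂
    intro x
    have hx : x ∈ ⋃ y ∈ s, { w : K | (w, y) ∈ δ₁ ∩ δ₂ } := hscov (Set.mem_univ x)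
    rw [Set.mem_iUnion₂] at hx
    obtain ⟨z, hz, hxz⟩ := hx
    have h1 : (p x, p z) ∈ ε' := hpm x z hxz.2
    have h2 : (p z, f h z) ∈ ε' := hh₂ z hz
    have h3 : (f h z, f h x) ∈ ε' := hsymm.symm _ _ (hh₁ x z hxz.1)
    exact hcomp ⟨f h z, ⟨p z, h1, h2⟩, h3⟩
  -- p and q are mutually inverse
  have hpq : ∀ x, p (q x) = x := by
    intro x
    have hx : Filter.Tendsto (fun h : ↥P => f h (q x)) 𝒰 (𝓝 x) := by
      rw [Uniform.tendsto_nhds_right, Filter.tendsto_def]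
      intro s hs
      obtain ⟨δ, hδ, hev⟩ := key s hs
      have hqev : ∀ᶠ h : ↥P in 𝒰, (q x, (f h).symm x) ∈ SetRel.symmetrize δ :=
        (hq x).eventually (Filter.eventually_of_mem
          (mem_nhds_left (q x) (symmetrize_mem_uniformity hδ)) fun w hw => hw)
      filter_upwards [hev, hqev] with h h1 h2
      have h3 : ((f h).symm x, q x) ∈ δ :=
        h2.2
      have h4 := h1 _ _ h3
      rw [Homeomorph.apply_symm_apply] at h4
      exact h4
    exact tendsto_nhds_unique (hp (q x)) hx
  have hqp : ∀ x, q (p x) = x := by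
    intro x
    have hx : Filter.Tendsto (fun h : ↥P => (f h).symm (p x)) 𝒰 (𝓝 x) := by
      rw [Uniform.tendsto_nhds_right, Filter.tendsto_def]
      intro s hs
      obtain ⟨δ, hδ, hev⟩ := keyInv s hs
      have hpev : ∀ᶠ h : ↥P in 𝒰, (p x, f h x) ∈ SetRel.symmetrize δ :=
        (hp x).eventually (Filter.eventually_of_mem
          (mem_nhds_left (p x) (symmetrize_mem_uniformity hδ)) fun w hw => hw)
      filter_upwards [hev, hpev] with h h1 h2
      have h3 : (f h x, p x) ∈ δ :=
        h2.2
      have h4 := h1 _ _ h3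
      rw [Homeomorph.symm_apply_apply] at h4
      exact h4
    exact tendsto_nhds_unique (hq (p x)) hx
  -- the limit homeomorphism
  let F : K ≃ₜ K :=
    { toFun := p, invFun := q, left_inv := hqp, right_inv := hpq,
      continuous_toFun := hpc, continuous_invFun := hqc }
  -- convergence in the compact-open topology
  have hcoC : Filter.Tendsto (fun h : ↥P => ((f h : K ≃ₜ K) : C(K, K))) 𝒰
      (𝓝 (F : C(K, K))) := by
    rw [ContinuousMap.tendsto_iff_tendstoUniformly]
    exact hpu
  have hcoH : Filter.Tendsto f (𝒰 : Filter ↥P) (@nhds _ (coTop K) F) := by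
    have h2 : @nhds _ (coTop K) F =
        Filter.comap (fun g : K ≃ₜ K => (g : C(K, K))) (𝓝 (F : C(K, K))) :=
      @nhds_induced C(K, K) (K ≃ₜ K) _ (fun g : K ≃ₜ K => (g : C(K, K))) F
    rw [h2, Filter.tendsto_comap_iff]
    exact hcoC
  have hFP : F ∈ P := by
    letI : TopologicalSpace (K ≃ₜ K) := coTop K
    exact hPclosed.mem_of_tendsto hcoH (Filter.Eventually.of_forall fun h => h.2)
  have hindF : (𝒰 : Filter ↥P) ≤
      @nhds _ (TopologicalSpace.induced (Subtype.val : ↥P → K ≃ₜ K) (coTop K)) ⟨F, hFP⟩ := by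
    have h1 : @nhds _ (TopologicalSpace.induced (Subtype.val : ↥P → K ≃ₜ K) (coTop K)) ⟨F, hFP⟩ =
        Filter.comap Subtype.val (@nhds _ (coTop K) F) :=
      @nhds_induced (K ≃ₜ K) ↥P (coTop K) Subtype.val ⟨F, hFP⟩
    rw [h1]
    exact Filter.map_le_iff_le_comap.1 hcoH
  have hσF : (𝒰 : Filter ↥P) ≤ @nhds _ σ ⟨F, hFP⟩ :=
    le_trans hindF (nhds_mono hcoarse)
  have hEq : (⟨F, hFP⟩ : ↥P) = g₀ :=
    tendsto_nhds_unique (Filter.tendsto_id'.2 hσF) (Filter.tendsto_id'.2 h𝒰)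
  exact hEq ▸ hindF
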